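/- Let F : R^d → R have L-Lipschitz gradient, H = B B^T with eigenvalues of H at least R > 0. Suppose the update direction g satisfies ∇F(ψ_t)^T g + √(2ε)‖B^{-1}∇F(ψ_t)‖ ≤ 0, let b = B^T g, and suppose ‖B^{-1}∇F(ψ_t)‖ ≥ m > 0. If the step size is β = (2√(2ε) m R)/(L ‖b‖²) · β' with 0 < β' < 1, then F(ψ_t + β g) - F(ψ_t) ≤ β √(2ε) m (β' - 1) < 0, i.e., the constraint value strictly decreases. -/

import Mathlib

open RealInnerProductSpace

lemma descent_lemma {n : ℕ} (f : EuclideanSpace ℝ (Fin n) → ℝ)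
    (hdiff : Differentiable ℝ f) (L : ℝ) (hL : 0 ≤ L)
    (hLip : LipschitzWith (Real.toNNReal L) (gradient f))
    (x v : EuclideanSpace ℝ (Fin n)) :
    f (x + v) - f x ≤ ⟪gradient f x, v⟫ + L / 2 * ‖v‖ ^ 2 := by
  have key : ∀ t : ℝ, HasDerivAt (fun t : ℝ => f (x + t • v))
      ⟪gradient f (x + t • v), v⟫ t := by
    intro t
    have h1 : HasFDerivAt f
        ((InnerProductSpace.toDual ℝ _) (gradient f (x + t • v))) (x + t • v) :=
      (hdiff _).hasGradientAt
    have h2 : HasDerivAt (fun t : ℝ => x + t • v) v t := by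
      simpa using ((hasDerivAt_id t).smul_const v).const_add x
    exact h1.comp_hasDerivAt t h2
  have hcont : Continuous (fun t : ℝ => ⟪gradient f (x + t • v), v⟫) := by
    exact (hLip.continuous.comp (by continuity)).inner continuous_const
  have heq : f (x + v) - f x = ∫ t in (0:ℝ)..1, ⟪gradient f (x + t • v), v⟫ := by
    have := intervalIntegral.integral_eq_sub_of_hasDerivAt (f := fun t : ℝ => f (x + t • v))
      (fun t _ => key t) (hcont.intervalIntegrable 0 1)
    simp only [one_smul, zero_smul, add_zero] at this
    linarith [this]
  have hbound : ∀ t ∈ Set.Icc (0:ℝ) 1,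
      ⟪gradient f (x + t • v), v⟫ ≤ ⟪gradient f x, v⟫ + L * t * ‖v‖ ^ 2 := by
    intro t ht
    have h1 : ⟪gradient f (x + t • v) - gradient f x, v⟫ ≤ L * t * ‖v‖ ^ 2 := by
      calc ⟪gradient f (x + t • v) - gradient f x, v⟫
          ≤ ‖gradient f (x + t • v) - gradient f x‖ * ‖v‖ := real_inner_le_norm _ _
        _ ≤ (L * ‖t • v‖) * ‖v‖ := by
            gcongr
            have := hLip.dist_le_mul (x + t • v) x
            rw [dist_eq_norm, dist_eq_norm] at this
            simpa [Real.coe_toNNReal L hL] using this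
        _ ≤ L * t * ‖v‖ ^ 2 := by
            rw [norm_smul, Real.norm_eq_abs, abs_of_nonneg ht.1]
            ring_nf; nlinarith [norm_nonneg v]
    have h2 : ⟪gradient f (x + t • v) - gradient f x, v⟫
        = ⟪gradient f (x + t • v), v⟫ - ⟪gradient f x, v⟫ := inner_sub_left _ _ _
    linarith
  have hint : (∫ t in (0:ℝ)..1, ⟪gradient f (x + t • v), v⟫)
      ≤ ∫ t in (0:ℝ)..1, (⟪gradient f x, v⟫ + L * t * ‖v‖ ^ 2) := by
    apply intervalIntegral.integral_mono_on (by norm_num) (hcont.intervalIntegrable 0 1)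
    · exact ((by fun_prop : Continuous fun t : ℝ => ⟪gradient f x, v⟫ + L * t * ‖v‖ ^ 2)).intervalIntegrable 0 1
    · exact hbound
  have hcalc : (∫ t in (0:ℝ)..1, (⟪gradient f x, v⟫ + L * t * ‖v‖ ^ 2))
      = ⟪gradient f x, v⟫ + L / 2 * ‖v‖ ^ 2 := by
    rw [intervalIntegral.integral_add (intervalIntegrable_const)
      ((by fun_prop : Continuous fun t : ℝ => L * t * ‖v‖ ^ 2).intervalIntegrable 0 1)]
    simp only [intervalIntegral.integral_const, smul_eq_mul]
    have : (∫ t in (0:ℝ)..1, L * t * ‖v‖ ^ 2) = L / 2 * ‖v‖ ^ 2 := by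
      have : (fun t : ℝ => L * t * ‖v‖ ^ 2) = fun t : ℝ => (L * ‖v‖ ^ 2) * t := by
        funext t; ring
      rw [this, intervalIntegral.integral_const_mul, integral_id]
      ring
    rw [this]; ring
  linarith [heq ▸ le_trans hint (le_of_eq hcalc)]


/-- Strict decrease of a violated constraint in the out-boundary case: with
`∇F(ψₜ)ᵀ g + √(2ε)‖B⁻¹∇F(ψₜ)‖ ≤ 0`, `b = Bᵀ g`, `‖B⁻¹∇F(ψₜ)‖ ≥ m > 0`, and step size
`β = (2√(2ε) m R)/(L‖b‖²)·β'` with `0 < β' < 1`, the constraint value strictly decreases: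
`F(ψₜ + βg) - F(ψₜ) ≤ β√(2ε) m (β' - 1) < 0`. -/
theorem stmt_3 {n : ℕ} (F : EuclideanSpace ℝ (Fin n) → ℝ)
    (hdiff : Differentiable ℝ F) (L : ℝ) (hL : 0 < L)
    (hLip : LipschitzWith (Real.toNNReal L) (gradient F))
    (B H : Matrix (Fin n) (Fin n) ℝ) (hHB : H = B * B.transpose) (hH : H.PosDef)
    (R : ℝ) (hR : 0 < R)
    (heig : ∀ x : EuclideanSpace ℝ (Fin n), R * ‖x‖ ^ 2 ≤ ⟪x, Matrix.toEuclideanLin H x⟫)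
    (ε : ℝ) (hε : 0 < ε) (ψt g b : EuclideanSpace ℝ (Fin n))
    (hb : b = Matrix.toEuclideanLin B.transpose g)
    (hconstr : ⟪gradient F ψt, g⟫ +
      Real.sqrt (2 * ε) * ‖Matrix.toEuclideanLin B⁻¹ (gradient F ψt)‖ ≤ 0)
    (m : ℝ) (hm : 0 < m) (hmle : m ≤ ‖Matrix.toEuclideanLin B⁻¹ (gradient F ψt)‖)
    (β β' : ℝ) (hβ'pos : 0 < β') (hβ'lt : β' < 1)
    (hβ : β = (2 * Real.sqrt (2 * ε) * m * R) / (L * ‖b‖ ^ 2) * β') :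
    F (ψt + β • g) - F ψt ≤ β * Real.sqrt (2 * ε) * m * (β' - 1) ∧
      β * Real.sqrt (2 * ε) * m * (β' - 1) < 0 := by
  set s := Real.sqrt (2 * ε) with hs_def
  have hs : 0 < s := Real.sqrt_pos.mpr (by linarith)
  -- gradient inner bound
  have hgrad : ⟪gradient F ψt, g⟫ ≤ -(s * m) := by
    have h1 : s * m ≤ s * ‖Matrix.toEuclideanLin B⁻¹ (gradient F ψt)‖ := by
      exact mul_le_mul_of_nonneg_left hmle hs.le
    linarith
  -- g ≠ 0
  have hg0 : g ≠ 0 := by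
    intro h
    rw [h, inner_zero_right] at hconstr
    nlinarith [mul_le_mul_of_nonneg_left hmle hs.le]
  -- ‖b‖² = ⟪g, H g⟫
  have hHfact : Matrix.toEuclideanLin H g
      = Matrix.toEuclideanLin B (Matrix.toEuclideanLin B.transpose g) := by
    simp [hHB, Matrix.toEuclideanLin_apply, Matrix.mulVec_mulVec]
  have hBadj : Matrix.toEuclideanLin B.transpose
      = LinearMap.adjoint (Matrix.toEuclideanLin B) := by
    rw [← Matrix.toEuclideanLin_conjTranspose_eq_adjoint,
      Matrix.conjTranspose_eq_transpose_of_trivial]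
  have hbsq : ‖b‖ ^ 2 = ⟪g, Matrix.toEuclideanLin H g⟫ := by
    rw [← real_inner_self_eq_norm_sq, hb, hHfact, hBadj]
    rw [LinearMap.adjoint_inner_left]
  have hge : R * ‖g‖ ^ 2 ≤ ‖b‖ ^ 2 := by rw [hbsq]; exact heig g
  have hgn : 0 < ‖g‖ := norm_pos_iff.mpr hg0
  have hgpos : 0 < ‖g‖ ^ 2 := by positivity
  have hbpos : 0 < ‖b‖ ^ 2 := lt_of_lt_of_le (by positivity) hge
  have hβpos : 0 < β := by
    rw [hβ]
    apply mul_pos _ hβ'pos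
    apply div_pos (by positivity) (by positivity)
  have hβeq : L * β * ‖b‖ ^ 2 = 2 * s * m * R * β' := by
    rw [hβ, div_mul_eq_mul_div, mul_div_assoc', div_mul_eq_mul_div,
      div_eq_iff (mul_pos hL hbpos).ne']; ring
  -- descent lemma
  have hdesc := descent_lemma F hdiff L hL.le hLip ψt (β • g)
  rw [real_inner_smul_right, norm_smul, Real.norm_eq_abs, abs_of_nonneg hβpos.le,
    mul_pow] at hdesc
  constructor
  · have h1 : β * ⟪gradient F ψt, g⟫ ≤ β * (-(s * m)) :=
      mul_le_mul_of_nonneg_left hgrad hβpos.le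
    have h2 : L / 2 * (β ^ 2 * ‖g‖ ^ 2) ≤ β * (s * m * β') := by
      have hA : (L * β ^ 2 / (2 * R)) * (R * ‖g‖ ^ 2) ≤ (L * β ^ 2 / (2 * R)) * ‖b‖ ^ 2 :=
        mul_le_mul_of_nonneg_left hge (by positivity)
      have e1 : (L * β ^ 2 / (2 * R)) * (R * ‖g‖ ^ 2) = L / 2 * (β ^ 2 * ‖g‖ ^ 2) := by
        field_simp
      have e2 : (L * β ^ 2 / (2 * R)) * ‖b‖ ^ 2 = β * (s * m * β') := by
        rw [div_mul_eq_mul_div, div_eq_iff (by positivity : (2 * R) ≠ 0)]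
        linear_combination β * hβeq
      linarith
    have e3 : β * -(s * m) + β * (s * m * β') = β * s * m * (β' - 1) := by ring
    linarith
  · have h5 : 0 < β * s * m := by positivity
    have := mul_neg_of_pos_of_neg h5 (by linarith : β' - 1 < 0)
    linarith
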